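/- Let N ≥ 1 and let m ≥ 2 be an even integer. Let C_0 ⊊ C_1 ⊊ ⋯ ⊊ C_m be a strictly increasing chain of F_2-linear subspaces of F_2^N with {0} ⊊ C_0, C_m = F_2^N, and C_r^⊥ = C_{m−r−1} for all 0 ≤ r ≤ m−1 (the binary Reed–Muller codes C_r = R(r, m) of length N = 2^m satisfy all of these hypotheses). Then there exist real numbers 1 > α_0 > α_1 > ⋯ > α_{m/2 − 1} > 1/2 and a fuzzy self-orthogonal code B in F_2^N such that B_1 = {0} and B_{α_r} = C_r for all 0 ≤ r ≤ m/2 − 1. -/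

import Mathlib

open scoped BigOperators

/-- A fuzzy set in `V`: a membership function with values in `[0,1]`. -/
def IsFuzzySet {V : Type*} (A : V → ℝ) : Prop :=
  ∀ x, 0 ≤ A x ∧ A x ≤ 1

/-- The upper `α`-level cut of a fuzzy set `A`. -/
def levelCut {V : Type*} (A : V → ℝ) (α : ℝ) : Set V :=
  {x | α ≤ A x}

/-- A set of vectors is an `F`-linear subspace. -/
def IsFLinearSubset (F : Type*) {V : Type*} [Field F] [AddCommGroup V] [Module F V]
    (s : Set V) : Prop :=
  ∃ W : Submodule F V, s = (W : Set V)

/-- A fuzzy linear code: a fuzzy set all of whose nonempty upper `α`-level cuts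
(for `α ∈ [0,1]`) are linear subspaces. -/
def IsFuzzyLinearCode (F : Type*) {V : Type*} [Field F] [AddCommGroup V] [Module F V]
    (A : V → ℝ) : Prop :=
  IsFuzzySet A ∧
    ∀ α ∈ Set.Icc (0 : ℝ) 1, (levelCut A α).Nonempty → IsFLinearSubset F (levelCut A α)

/-- The Euclidean dual of a set of vectors in `F^n`. -/
def dualSet {F : Type*} [Field F] {n : ℕ} (S : Set (Fin n → F)) : Set (Fin n → F) :=
  {y | ∀ x ∈ S, ∑ i, x i * y i = 0}

/-- A fuzzy self-orthogonal code: a fuzzy linear code with `|Im A| > 1` such that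
`(A_{1-α})^⊥ = A_α` for every `α ∈ Im A`. -/
def IsFuzzySelfOrthogonal {F : Type*} [Field F] {n : ℕ} (A : (Fin n → F) → ℝ) : Prop :=
  IsFuzzyLinearCode F A ∧ 1 < (Set.range A).ncard ∧
    ∀ α ∈ Set.range A, dualSet (levelCut A (1 - α)) = levelCut A α

/-- A fuzzy self-dual code: a fuzzy self-orthogonal code such that `(A_β)^⊥ = A_β`
for some `β ∈ Im A`. -/
def IsFuzzySelfDual {F : Type*} [Field F] {n : ℕ} (A : (Fin n → F) → ℝ) : Prop :=
  IsFuzzySelfOrthogonal A ∧ ∃ β ∈ Set.range A, dualSet (levelCut A β) = levelCut A β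

/-- even case, Reed–Muller-type chains: given a strictly increasing chain
`{0} ⊊ C 0 ⊊ C 1 ⊊ ⋯ ⊊ C m = F_2^N` of binary linear codes with
`(C r)^⊥ = C (m - r - 1)` for `0 ≤ r ≤ m - 1`, where `m ≥ 2` is even, there are reals
`1 > α 0 > ⋯ > α (m/2 - 1) > 1/2` and a fuzzy self-orthogonal code `B` in `F_2^N` with
`B_1 = {0}` and `B_{α r} = C r` for `0 ≤ r ≤ m/2 - 1`. -/
theorem fuzzySelfOrthogonal_of_ReedMuller_chain_even
    {N m : ℕ} (hN : 1 ≤ N) (hm : 2 ≤ m) (hmeven : Even m)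
    (C : ℕ → Submodule (ZMod 2) (Fin N → ZMod 2))
    (hchain : ∀ r < m, C r < C (r + 1))
    (h0 : ⊥ < C 0)
    (htop : C m = ⊤)
    (hdual : ∀ r ≤ m - 1,
      dualSet (C r : Set (Fin N → ZMod 2)) = (C (m - r - 1) : Set (Fin N → ZMod 2))) :
    ∃ α : ℕ → ℝ,
      α 0 < 1 ∧ (∀ r < m / 2 - 1, α (r + 1) < α r) ∧ 1 / 2 < α (m / 2 - 1) ∧
      ∃ B : (Fin N → ZMod 2) → ℝ,
        IsFuzzySelfOrthogonal B ∧
        levelCut B 1 = {0} ∧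
        ∀ r ≤ m / 2 - 1, levelCut B (α r) = (C r : Set (Fin N → ZMod 2)) := by
  classical
  have hm1 : (0:ℝ) < (m:ℝ) + 1 := by positivity
  have hmR : (2:ℝ) ≤ (m:ℝ) := by exact_mod_cast hm
  set f : ℕ → ℝ := fun r => ((m:ℝ) - r) / ((m:ℝ) + 1) with hf
  have hflt : ∀ ⦃r s : ℕ⦄, r < s → f s < f r := by
    intro r s h
    have h' : (r:ℝ) < (s:ℝ) := by exact_mod_cast h
    simp only [hf]
    gcongr
  have hfle : ∀ ⦃r s : ℕ⦄, r ≤ s → f s ≤ f r := by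
    intro r s h
    rcases eq_or_lt_of_le h with h | h
    · subst h; exact le_rfl
    · exact (hflt h).le
  have hfinv : ∀ ⦃r s : ℕ⦄, f s ≤ f r → r ≤ s := by
    intro r s h
    by_contra h'
    push_neg at h'
    exact absurd h (not_le.mpr (hflt h'))
  have hfm : f m = 0 := by simp [hf]
  have hf0lt1 : f 0 < 1 := by
    simp only [hf, Nat.cast_zero, sub_zero]
    rw [div_lt_one hm1]; linarith
  have hmono : ∀ r s, r ≤ s → s ≤ m → C r ≤ C s := by
    intro r s hrs
    induction s, hrs using Nat.le_induction with
    | base => intro _; exact le_rfl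
    | succ s hs ih => intro hsm; exact (ih (by omega)).trans (hchain s (by omega)).le
  have hex : ∀ x : Fin N → ZMod 2, ∃ r, x ∈ C r := by
    intro x; exact ⟨m, by rw [htop]; exact Submodule.mem_top⟩
  set d : (Fin N → ZMod 2) → ℕ := fun x => Nat.find (hex x) with hdDef
  have hdm : ∀ x, d x ≤ m := by
    intro x; exact Nat.find_le (by rw [htop]; exact Submodule.mem_top)
  have hmemd : ∀ x, x ∈ C (d x) := fun x => Nat.find_spec (hex x)
  have hchar : ∀ x r, r ≤ m → (x ∈ C r ↔ d x ≤ r) := by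
    intro x r hr
    constructor
    · intro hx; exact Nat.find_min' (hex x) hx
    · intro hx; exact hmono _ _ hx hr (hmemd x)
  set B : (Fin N → ZMod 2) → ℝ := fun x => if x = 0 then 1 else f (d x) with hB
  have hB0 : B 0 = 1 := by simp [hB]
  have hBne : ∀ x, x ≠ (0 : Fin N → ZMod 2) → B x = f (d x) := by
    intro x hx; simp [hB, hx]
  have hBle1 : ∀ x, B x ≤ 1 := by
    intro x
    by_cases hx : x = 0
    · subst hx; rw [hB0]
    · rw [hBne x hx]
      exact le_trans (hfle (Nat.zero_le _)) hf0lt1.le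
  have hB0le : ∀ x, 0 ≤ B x := by
    intro x
    by_cases hx : x = 0
    · subst hx; rw [hB0]; norm_num
    · rw [hBne x hx]
      calc (0:ℝ) = f m := hfm.symm
        _ ≤ f (d x) := hfle (hdm x)
  have hfuzzy : IsFuzzySet B := fun x => ⟨hB0le x, hBle1 x⟩
  have hcut : ∀ r, r ≤ m → levelCut B (f r) = (C r : Set (Fin N → ZMod 2)) := by
    intro r hr
    ext x
    simp only [levelCut, Set.mem_setOf_eq, SetLike.mem_coe]
    constructor
    · intro h
      by_cases hx : x = 0
      · subst hx; exact zero_mem _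
      · rw [hBne x hx] at h
        exact (hchar x r hr).mpr (hfinv h)
    · intro h
      by_cases hx : x = 0
      · subst hx; rw [hB0]
        exact le_trans (hfle (Nat.zero_le _)) hf0lt1.le
      · rw [hBne x hx]
        exact hfle ((hchar x r hr).mp h)
  have hB1 : levelCut B 1 = ({0} : Set (Fin N → ZMod 2)) := by
    ext x
    simp only [levelCut, Set.mem_setOf_eq, Set.mem_singleton_iff]
    constructor
    · intro h
      by_contra hx
      rw [hBne x hx] at h
      have : f (d x) < 1 := lt_of_le_of_lt (hfle (Nat.zero_le _)) hf0lt1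
      linarith
    · rintro rfl; rw [hB0]
  have hcut0 : levelCut B 0 = Set.univ := by
    ext x; simp only [levelCut, Set.mem_setOf_eq, Set.mem_univ, iff_true]
    exact hB0le x
  have hdualuniv : dualSet (Set.univ : Set (Fin N → ZMod 2)) = {0} := by
    ext y
    simp only [dualSet, Set.mem_setOf_eq, Set.mem_univ, forall_true_left,
      Set.mem_singleton_iff]
    constructor
    · intro h
      funext i
      have := h (Pi.single i 1)
      simpa [Pi.single_apply] using this
    · rintro rfl x; simp
  have hdualzero : dualSet (({0} : Set (Fin N → ZMod 2))) = Set.univ := by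
    ext y
    simp [dualSet]
  -- min property
  have hmin : ∀ x y, min (B x) (B y) ≤ B (x + y) := by
    intro x y
    by_cases hx : x = 0
    · subst hx; rw [zero_add]; exact min_le_right _ _
    by_cases hy : y = 0
    · subst hy; rw [add_zero]; exact min_le_left _ _
    by_cases hxy : x + y = 0
    · rw [hxy, hB0]
      exact le_trans (min_le_left _ _) (hBle1 x)
    · rw [hBne _ hx, hBne _ hy, hBne _ hxy]
      have hmax : max (d x) (d y) ≤ m := max_le (hdm x) (hdm y)
      have hxm : x ∈ C (max (d x) (d y)) :=
        hmono _ _ (le_max_left _ _) hmax (hmemd x)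
      have hym : y ∈ C (max (d x) (d y)) :=
        hmono _ _ (le_max_right _ _) hmax (hmemd y)
      have hsum : x + y ∈ C (max (d x) (d y)) := add_mem hxm hym
      have hdsum : d (x + y) ≤ max (d x) (d y) := (hchar _ _ hmax).mp hsum
      have : f (max (d x) (d y)) ≤ f (d (x + y)) := hfle hdsum
      rcases le_total (d x) (d y) with h | h
      · rw [max_eq_right h] at this
        exact le_trans (min_le_right _ _) this
      · rw [max_eq_left h] at this
        exact le_trans (min_le_left _ _) this
  -- fuzzy linear code
  have hlincode : IsFuzzyLinearCode (ZMod 2) B := by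
    refine ⟨hfuzzy, ?_⟩
    intro α hα _
    have h0mem : (0 : Fin N → ZMod 2) ∈ levelCut B α := by
      simp only [levelCut, Set.mem_setOf_eq, hB0]
      exact hα.2
    refine ⟨{ carrier := levelCut B α
              add_mem' := ?_
              zero_mem' := h0mem
              smul_mem' := ?_ }, rfl⟩
    · intro a b ha hb
      simp only [levelCut, Set.mem_setOf_eq] at ha hb ⊢
      exact le_trans (le_min ha hb) (hmin a b)
    · intro c x hx
      have hc : c = 0 ∨ c = 1 := by revert c; decide
      rcases hc with rfl | rfl
      · simpa using h0mem
      · simpa using hx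
  -- key self-orthogonality at f r
  have hkey : ∀ r, r ≤ m → dualSet (levelCut B (1 - f r)) = levelCut B (f r) := by
    intro r hr
    rcases eq_or_lt_of_le hr with rfl | hrm
    · rw [hfm, sub_zero, hB1, hdualzero, ← hcut0]
    · have hr1 : r ≤ m - 1 := by omega
      have hcastsub : ((m - r - 1 : ℕ) : ℝ) = (m : ℝ) - r - 1 := by
        have h1 : (m - r - 1) + (r + 1) = m := by omega
        have := congrArg (Nat.cast : ℕ → ℝ) h1
        push_cast at this
        linarith
      have heq : 1 - f r = f (m - r - 1) := by
        simp only [hf, hcastsub]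
        field_simp
        ring
      have hmr1 : m - r - 1 ≤ m := by omega
      have hmr2 : m - r - 1 ≤ m - 1 := by omega
      have hmr3 : m - (m - r - 1) - 1 = r := by omega
      rw [heq, hcut _ hmr1, hdual _ hmr2, hmr3, hcut _ hr]
  -- range conditions
  have horth : ∀ α ∈ Set.range B, dualSet (levelCut B (1 - α)) = levelCut B α := by
    rintro α ⟨x, rfl⟩
    by_cases hx : x = 0
    · subst hx; rw [hB0, sub_self, hcut0, hdualuniv, hB1]
    · rw [hBne x hx]
      exact hkey _ (hdm x)
  have hncard : 1 < (Set.range B).ncard := by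
    obtain ⟨x0, hx0C, hx0ne⟩ : ∃ x ∈ C 0, x ∉ (⊥ : Submodule (ZMod 2) (Fin N → ZMod 2)) :=
      SetLike.exists_of_lt h0
    have hx0 : x0 ≠ 0 := by simpa using hx0ne
    have hBx0 : B x0 < 1 := by
      rw [hBne x0 hx0]
      exact lt_of_le_of_lt (hfle (Nat.zero_le _)) hf0lt1
    rw [Set.one_lt_ncard_iff (Set.finite_range B)]
    exact ⟨1, B x0, ⟨0, hB0⟩, ⟨x0, rfl⟩, (ne_of_lt hBx0).symm⟩
  have hSO : IsFuzzySelfOrthogonal B := ⟨hlincode, hncard, horth⟩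
  -- final assembly
  refine ⟨f, hf0lt1, ?_, ?_, B, hSO, hB1, ?_⟩
  · intro r _
    exact hflt (Nat.lt_succ_self r)
  · -- 1/2 < f (m/2 - 1)
    obtain ⟨k, hk⟩ := hmeven
    have hcast2 : ((m / 2 - 1 : ℕ) : ℝ) = (m : ℝ) / 2 - 1 := by
      have h1 : (m / 2 - 1) * 2 + 2 = m := by omega
      have := congrArg (Nat.cast : ℕ → ℝ) h1
      push_cast at this
      linarith
    simp only [hf, hcast2]
    rw [lt_div_iff₀ hm1]
    linarith
  · intro r hr
    exact hcut r (by omega)
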